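/- Monotonicity of the GRR/OUE sampling variance factor: the function y(x) = e^{1/x} / (x·(e^{1/x} − 1)²) is strictly increasing on (0, ∞); that is, for all real numbers x₁, x₂ with 0 < x₁ < x₂ one has e^{1/x₁}/(x₁·(e^{1/x₁} − 1)²) < e^{1/x₂}/(x₂·(e^{1/x₂} − 1)²). -/

import Mathlib

open Real Set

private lemma aux_hasDerivAt (t : ℝ) :
    HasDerivAt (fun t : ℝ => (t - 1) * Real.exp t - (t + 1) * Real.exp (-t) + 2)
      (t * Real.exp t + t * Real.exp (-t)) t := by
  have h1 : HasDerivAt (fun t : ℝ => (t - 1) * Real.exp t)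
      (1 * Real.exp t + (t - 1) * Real.exp t) t :=
    ((hasDerivAt_id t).sub_const 1).mul (Real.hasDerivAt_exp t)
  have h2 : HasDerivAt (fun t : ℝ => Real.exp (-t)) (-Real.exp (-t)) t := by
    simpa [Function.comp_def] using ((Real.hasDerivAt_exp (-t)).comp t ((hasDerivAt_id t).neg))
  have h3 : HasDerivAt (fun t : ℝ => (t + 1) * Real.exp (-t))
      (1 * Real.exp (-t) + (t + 1) * -Real.exp (-t)) t :=
    ((hasDerivAt_id t).add_const 1).mul h2
  have : HasDerivAt (fun t : ℝ => (t - 1) * Real.exp t - (t + 1) * Real.exp (-t) + 2)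
      (1 * Real.exp t + (t - 1) * Real.exp t - (1 * Real.exp (-t) + (t + 1) * -Real.exp (-t))) t :=
    ((h1.sub h3).add_const 2)
  convert this using 1
  ring

private lemma aux_pos {t : ℝ} (ht : 0 < t) :
    0 < (t - 1) * Real.exp t - (t + 1) * Real.exp (-t) + 2 := by
  have hmono : StrictMonoOn
      (fun t : ℝ => (t - 1) * Real.exp t - (t + 1) * Real.exp (-t) + 2) (Set.Ici 0) := by
    apply strictMonoOn_of_deriv_pos (convex_Ici 0)
    · exact (Continuous.sub ((continuous_id.sub continuous_const).mul Real.continuous_exp)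
        ((continuous_id.add continuous_const).mul (Real.continuous_exp.comp continuous_neg))).add
        continuous_const |>.continuousOn
    · intro s hs
      rw [interior_Ici] at hs
      rw [(aux_hasDerivAt s).deriv]
      have : 0 < Real.exp s + Real.exp (-s) := by positivity
      calc (0:ℝ) = s * 0 := by ring
        _ < s * (Real.exp s + Real.exp (-s)) := by
            exact mul_lt_mul_of_pos_left this hs
        _ = s * Real.exp s + s * Real.exp (-s) := by ring
  have := hmono (Set.self_mem_Ici) (Set.mem_Ici.mpr ht.le) ht
  simp only [sub_zero, zero_sub, zero_add, zero_mul, Real.exp_zero, neg_zero] at this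
  linarith

private lemma f_strictMono :
    StrictMonoOn (fun t : ℝ => (Real.exp t + Real.exp (-t) - 2) / t) (Set.Ioi 0) := by
  apply strictMonoOn_of_deriv_pos (convex_Ioi 0)
  · apply ContinuousOn.div
    · exact ((Real.continuous_exp.add (Real.continuous_exp.comp continuous_neg)).sub
        continuous_const).continuousOn
    · exact continuousOn_id
    · intro s hs; exact ne_of_gt hs
  · intro s hs
    rw [interior_Ioi] at hs
    have hs0 : (0:ℝ) < s := hs
    have hN : HasDerivAt (fun t : ℝ => Real.exp t + Real.exp (-t) - 2)
        (Real.exp s - Real.exp (-s)) s := by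
      have h2 : HasDerivAt (fun t : ℝ => Real.exp (-t)) (-Real.exp (-s)) s := by
        simpa [Function.comp_def] using ((Real.hasDerivAt_exp (-s)).comp s ((hasDerivAt_id s).neg))
      simpa [sub_eq_add_neg] using ((Real.hasDerivAt_exp s).add h2).sub_const 2
    have hdiv : HasDerivAt (fun t : ℝ => (Real.exp t + Real.exp (-t) - 2) / t)
        (((Real.exp s - Real.exp (-s)) * s - (Real.exp s + Real.exp (-s) - 2) * 1) / s ^ 2) s :=
      hN.div (hasDerivAt_id s) (ne_of_gt hs0)
    rw [hdiv.deriv]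
    apply div_pos _ (by positivity)
    have := aux_pos hs0
    nlinarith [this]

/-- Monotonicity of the GRR/OUE sampling variance factor:
`y(x) = e^{1/x} / (x·(e^{1/x} − 1)²)` is strictly increasing on `(0, ∞)`. -/
theorem grr_oue_variance_factor_strict_mono (x₁ x₂ : ℝ) (h₁ : 0 < x₁) (h₁₂ : x₁ < x₂) :
    Real.exp (1 / x₁) / (x₁ * (Real.exp (1 / x₁) - 1) ^ 2)
      < Real.exp (1 / x₂) / (x₂ * (Real.exp (1 / x₂) - 1) ^ 2) := by
  have h₂ : 0 < x₂ := h₁.trans h₁₂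
  set t₁ := 1 / x₁ with ht₁def
  set t₂ := 1 / x₂ with ht₂def
  have ht₁ : 0 < t₁ := by positivity
  have ht₂ : 0 < t₂ := by positivity
  have hlt : t₂ < t₁ := by
    apply one_div_lt_one_div_of_lt h₁ h₁₂
  -- rewrite each side as 1 / f(t)
  have key : ∀ x : ℝ, 0 < x → Real.exp (1/x) / (x * (Real.exp (1/x) - 1) ^ 2)
      = 1 / ((Real.exp (1/x) + Real.exp (-(1/x)) - 2) / (1/x)) := by
    intro x hx
    have hx' : x ≠ 0 := ne_of_gt hx
    have hee : Real.exp (1/x) * Real.exp (-(1/x)) = 1 := by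
      rw [← Real.exp_add]; simp
    have hexp : Real.exp (1/x) ≠ 0 := Real.exp_ne_zero _
    have hDpos : 0 < Real.exp (1/x) + Real.exp (-(1/x)) - 2 := by
      have hxp : 0 < 1/x := by positivity
      have ha : 1/x + 1 < Real.exp (1/x) := Real.add_one_lt_exp (ne_of_gt hxp)
      have hb : -(1/x) + 1 < Real.exp (-(1/x)) := Real.add_one_lt_exp (by linarith)
      linarith
    have hD : (Real.exp (1/x) - 1)^2
        = Real.exp (1/x) * (Real.exp (1/x) + Real.exp (-(1/x)) - 2) := by
      linear_combination -hee
    rw [hD, one_div_div]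
    rw [div_eq_div_iff (by positivity) (ne_of_gt hDpos)]
    field_simp
  rw [key x₁ h₁, key x₂ h₂]
  rw [← ht₁def, ← ht₂def]
  have hf := f_strictMono (Set.mem_Ioi.mpr ht₂) (Set.mem_Ioi.mpr ht₁) hlt
  simp only at hf
  have hfpos : 0 < (Real.exp t₂ + Real.exp (-t₂) - 2) / t₂ := by
    apply div_pos _ ht₂
    have h1 : t₂ + 1 < Real.exp t₂ := Real.add_one_lt_exp (ne_of_gt ht₂)
    have h2 : -t₂ + 1 < Real.exp (-t₂) := Real.add_one_lt_exp (by linarith)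
    linarith
  exact one_div_lt_one_div_of_lt hfpos hf
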